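/- arXiv:1302.0587 — 2 statements merged into one kernel-verified Lean document; each statement's English description precedes it below -/
import Mathlib

section
/- Let p and q be relatively prime odd integers with p ≥ 3 and 0 < q < p, and set P = 4p³ − p and Q = (4p² − 1)q + 2p. Then the number of integers k with 0 < k < P such that ⌊q·k/p⌋ is even and ⌊Q·k/P⌋ is odd exceeds by exactly one the number of integers k with 0 < k < P such that ⌊q·k/p⌋ is odd and ⌊Q·k/P⌋ is even. -/
set_option maxHeartbeats 4000000
open Finset

def eps (n : ℤ) : ℤ := if Even n then 1 else -1
lemma eps_even {n : ℤ} (h : Even n) : eps n = 1 := if_pos h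
lemma eps_odd {n : ℤ} (h : Odd n) : eps n = -1 := if_neg (Int.not_even_iff_odd.2 h)
lemma eps_add (a b : ℤ) : eps (a + b) = eps a * eps b := by
  rcases Int.even_or_odd a with ha | ha <;> rcases Int.even_or_odd b with hb | hb
  · rw [eps_even (ha.add hb), eps_even ha, eps_even hb]; ring
  · rw [eps_odd (ha.add_odd hb), eps_even ha, eps_odd hb]; ring
  · rw [eps_odd (ha.add_even hb), eps_odd ha, eps_even hb]; ring
  · rw [eps_even (ha.add_odd hb), eps_odd ha, eps_odd hb]; ring
lemma eps_eq_of_even_add {a b : ℤ} (h : Even (a + b)) : eps a = eps b := by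
  rcases Int.even_or_odd a with ha | ha
  · have hb : Even b := by rcases Int.even_add.1 h with ⟨h1,h2⟩; exact h1 ha
    rw [eps_even ha, eps_even hb]
  · have hb : Odd b := by
      rcases Int.even_or_odd b with hb | hb
      · exact absurd (ha.add_even hb) (by rw [Int.not_odd_iff_even]; exact h)
      · exact hb
    rw [eps_odd ha, eps_odd hb]
lemma eps_mul_odd {c : ℤ} (hc : Odd c) (b : ℤ) : eps (c * b) = eps b := by
  rcases Int.even_or_odd b with hb | hb
  · rw [eps_even (hb.mul_left c), eps_even hb]
  · rw [eps_odd (hc.mul hb), eps_odd hb]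
lemma floor_eq_ediv (a b : ℤ) (hb : 0 < b) : ⌊(a : ℚ) / (b : ℚ)⌋ = a / b := by
  have h1 : ((b.toNat : ℕ) : ℤ) = b := by omega
  rw [← h1]; push_cast; rw [Rat.floor_intCast_div_natCast]
lemma sum_Ico_int (n : ℕ) (f : ℤ → ℤ) :
    ∑ k ∈ Ico (0:ℤ) (n:ℤ), f k = ∑ t ∈ range n, f (t : ℤ) := by
  refine sum_nbij' (fun k => k.toNat) (fun t => (t : ℤ)) ?_ ?_ ?_ ?_ ?_ <;>
      intro a ha <;> simp [Finset.mem_Ico, Finset.mem_range] at *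
  · omega
  · omega
  · omega
  · congr 1; omega
lemma alt_sum_range (n : ℕ) :
    ∑ t ∈ range n, eps (t : ℤ) = if Even n then 0 else 1 := by
  induction n with
  | zero => simp
  | succ m ih =>
    rw [Finset.sum_range_succ, ih]
    rcases Nat.even_or_odd m with hm | hm
    · rw [if_pos hm, if_neg (by simp [Nat.even_add_one, hm]),
        eps_even (by exact_mod_cast hm : Even (m:ℤ))]; ring
    · rw [if_neg (by simp [Nat.not_even_iff_odd]; exact hm),
        if_pos (by simp [Nat.even_add_one, Nat.not_even_iff_odd]; exact hm),
        eps_odd (by exact_mod_cast hm : Odd (m:ℤ))]; ring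
lemma pair_cancel (K : ℕ) (t : ℤ → ℤ) (h : ∀ u : ℕ, u < K → t (2*u) + t (2*u+1) = 0) :
    ∑ s ∈ range (2*K), t (s:ℤ) = 0 := by
  induction K with
  | zero => simp
  | succ M ih =>
    have h2 : 2*(M+1) = (2*M) + 1 + 1 := by ring
    rw [h2, Finset.sum_range_succ, Finset.sum_range_succ,
      ih (fun u hu => h u (by omega))]
    have := h M (by omega)
    push_cast at this ⊢
    linarith

/-- Let `p` and `q` be relatively prime odd integers with `p ≥ 3` and `0 < q < p`, and set
`P = 4p³ − p` and `Q = (4p² − 1)q + 2p`. Then the number of integers `k` with `0 < k < P`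
such that `⌊q·k/p⌋` is even and `⌊Q·k/P⌋` is odd exceeds by exactly one the number of
integers `k` with `0 < k < P` such that `⌊q·k/p⌋` is odd and `⌊Q·k/P⌋` is even. -/
theorem count_parity_change (p q P Q : ℤ) (hcop : IsCoprime p q) (hpodd : Odd p)
    (hqodd : Odd q) (hp : 3 ≤ p) (hq0 : 0 < q) (hqp : q < p)
    (hP : P = 4 * p ^ 3 - p) (hQ : Q = (4 * p ^ 2 - 1) * q + 2 * p) :
    Set.ncard {k : ℤ | 0 < k ∧ k < P ∧ Even ⌊(q : ℚ) * (k : ℚ) / (p : ℚ)⌋ ∧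
        Odd ⌊(Q : ℚ) * (k : ℚ) / (P : ℚ)⌋} =
      Set.ncard {k : ℤ | 0 < k ∧ k < P ∧ Odd ⌊(q : ℚ) * (k : ℚ) / (p : ℚ)⌋ ∧
        Even ⌊(Q : ℚ) * (k : ℚ) / (P : ℚ)⌋} + 1 := by
  classical
  have hp0 : (0:ℤ) < p := by omega
  set N : ℤ := 4*p^2 - 1 with hN
  have hN0 : (0:ℤ) < N := by nlinarith
  have hPN : P = p * N := by rw [hP, hN]; ring
  have hP0 : (0:ℤ) < P := by rw [hPN]; positivity
  set F : ℤ → ℤ := fun k => q * k / p with hF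
  set G : ℤ → ℤ := fun k => Q * k / P with hG
  have hfl1 : ∀ k : ℤ, ⌊(q:ℚ) * (k:ℚ) / (p:ℚ)⌋ = F k := by
    intro k
    have : (q:ℚ) * (k:ℚ) = ((q*k : ℤ) : ℚ) := by push_cast; ring
    rw [this, floor_eq_ediv _ _ hp0]
  have hfl2 : ∀ k : ℤ, ⌊(Q:ℚ) * (k:ℚ) / (P:ℚ)⌋ = G k := by
    intro k
    have : (Q:ℚ) * (k:ℚ) = ((Q*k : ℤ) : ℚ) := by push_cast; ring
    rw [this, floor_eq_ediv _ _ hP0]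
  -- the main sum identity
  have main : ∑ k ∈ Ico (0:ℤ) P, (eps (F k) - eps (G k)) = 2 := by
    have hpne : p ≠ 0 := by omega
    have hPne : P ≠ 0 := by omega
    have hNne : N ≠ 0 := by omega
    -- the inner sum S_i
    have hSi : ∀ i : ℤ, 0 ≤ i → i < p →
        (∑ j ∈ Ico (0:ℤ) N, eps j * eps ((N*((q*i)%p) + 2*p*i + 2*p^2*j)/P))
          = if i = 0 then -1 else 1 := by
      intro i hi0 hip
      set a : ℤ := (q*i) % p with ha
      set m : ℤ := N*a + 2*p*i with hm
      have ha0 : 0 ≤ a := Int.emod_nonneg _ hpne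
      have hap : a < p := Int.emod_lt_of_pos _ hp0
      have haiff : a = 0 → i = 0 := by
        intro h0
        have hdvd : p ∣ q * i := Int.dvd_of_emod_eq_zero h0
        have hdi : p ∣ i := hcop.dvd_of_dvd_mul_left hdvd
        have hz : i % p = 0 := Int.emod_eq_zero_of_dvd hdi
        rwa [Int.emod_eq_of_lt hi0 hip] at hz
      have hm0 : 0 ≤ m := by rw [hm]; positivity
      have hmP : m < P := by rw [hm, hPN, hN]; nlinarith
      -- pointwise parity decomposition
      have h4a : ∀ j : ℤ, 0 ≤ j → j < N →
          eps ((m + 2*p^2*j)/P) =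
            eps ((2*p*j) % N) * (if m + p*((2*p*j)%N) < P then 1 else -1) := by
        intro j hj0 hjN
        set s : ℤ := (2*p*j) % N with hs
        set d : ℤ := (2*p*j) / N with hd
        have hsd : N * d + s = 2*p*j := Int.mul_ediv_add_emod _ _
        have hs0 : 0 ≤ s := Int.emod_nonneg _ hNne
        have hsN : s < N := Int.emod_lt_of_pos _ hN0
        have hepssd : eps s = eps d := by
          apply eps_eq_of_even_add
          exact ⟨p*j - (2*p^2-1)*d, by linear_combination hsd - d*hN⟩
        have hsplit : m + 2*p^2*j = (m + p*s) + P*d := by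
          rw [hPN]; linear_combination p * hsd.symm
        have hpsP : p * s < P := by
          rw [hPN]
          have hs1 : s ≤ N - 1 := by omega
          nlinarith
        by_cases hlt : m + p*s < P
        · rw [if_pos hlt, hsplit, Int.add_mul_ediv_left _ _ hPne,
            Int.ediv_eq_zero_of_lt (by positivity) hlt]
          rw [zero_add, ← hepssd]; ring
        · rw [if_neg hlt]
          push_neg at hlt
          have h2P : m + p*s - P < P := by omega
          have hdiv1 : (m + p*s) / P = 1 := by
            have he : m + p*s = (m + p*s - P) + P*1 := by ring
            rw [he, Int.add_mul_ediv_left _ _ hPne,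
              Int.ediv_eq_zero_of_lt (by omega) h2P, zero_add]
          rw [hsplit, Int.add_mul_ediv_left _ _ hPne, hdiv1]
          have hne : eps (1 + d) = -eps d := by
            rw [eps_add, eps_odd odd_one]; ring
          rw [hne, ← hepssd]; ring
      -- reindex j ↦ s = (2pj) % N
      have hinv : ∀ x : ℤ, 0 ≤ x → x < N → (2*p*((2*p*x)%N))%N = x := by
        intro x hx0 hxN
        have hsd : N * ((2*p*x)/N) + (2*p*x)%N = 2*p*x := Int.mul_ediv_add_emod _ _
        have hexp : 2*p*((2*p*x)%N) = x + N*(x - 2*p*((2*p*x)/N)) := by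
          linear_combination 2*p*hsd - x*hN
        rw [hexp, Int.add_mul_emod_self_left, Int.emod_eq_of_lt hx0 hxN]
      have h4b : (∑ j ∈ Ico (0:ℤ) N, eps j * eps ((m + 2*p^2*j)/P))
          = ∑ s ∈ Ico (0:ℤ) N,
              eps ((2*p*s)/N) * eps s * (if m + p*s < P then 1 else -1) := by
        refine sum_nbij' (fun j => (2*p*j) % N) (fun s => (2*p*s) % N) ?_ ?_ ?_ ?_ ?_
        · intro x hx
          simp only [mem_Ico] at *
          exact ⟨Int.emod_nonneg _ hNne, Int.emod_lt_of_pos _ hN0⟩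
        · intro x hx
          simp only [mem_Ico] at *
          exact ⟨Int.emod_nonneg _ hNne, Int.emod_lt_of_pos _ hN0⟩
        · intro x hx; simp only [mem_Ico] at hx; exact hinv x hx.1 hx.2
        · intro x hx; simp only [mem_Ico] at hx; exact hinv x hx.1 hx.2
        · intro j hj
          simp only [mem_Ico] at hj
          set s : ℤ := (2*p*j) % N with hs
          set d : ℤ := (2*p*j) / N with hd
          have hsd : N * d + s = 2*p*j := Int.mul_ediv_add_emod _ _
          have hexp : 2*p*s = j + N*(j - 2*p*d) := by
            linear_combination 2*p*hsd - j*hN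
          have hdivs : (2*p*s)/N = j/N + (j - 2*p*d) := by
            rw [hexp, Int.add_mul_ediv_left _ _ hNne]
          have hj_small : j / N = 0 := Int.ediv_eq_zero_of_lt hj.1 hj.2
          have hepsj : eps ((2*p*s)/N) = eps j := by
            rw [hdivs, hj_small, zero_add]
            apply eps_eq_of_even_add
            exact ⟨j - p*d, by ring⟩
          rw [h4a j hj.1 hj.2, hepsj]; ring
      rw [h4b]
      -- split off the last term s = N-1
      have hico : Ico (0:ℤ) N = insert (N-1) (Ico (0:ℤ) (N-1)) := by
        ext x; simp only [mem_Ico, mem_insert]; omega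
      rw [hico, Finset.sum_insert (by simp [mem_Ico])]
      -- the paired part vanishes
      obtain ⟨K, hK⟩ : ∃ K : ℕ, (K:ℤ) = 2*p^2 - 1 :=
        ⟨(2*p^2-1).toNat, Int.toNat_of_nonneg (by nlinarith)⟩
      have h2K : ((2*K : ℕ):ℤ) = N - 1 := by push_cast; rw [hN]; omega
      have hpairs : ∑ s ∈ Ico (0:ℤ) (N-1),
          eps ((2*p*s)/N) * eps s * (if m + p*s < P then 1 else -1) = 0 := by
        rw [← h2K, sum_Ico_int]
        refine pair_cancel K
          (fun x => eps ((2*p*x)/N) * eps x * (if m + p*x < P then 1 else -1)) ?_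
        intro u hu
        set v : ℤ := (u:ℤ) with hv
        have hv0 : 0 ≤ v := Int.natCast_nonneg u
        have hvK : v ≤ 2*p^2 - 2 := by
          have hlt : (u:ℤ) < (K:ℤ) := by exact_mod_cast hu
          omega
        -- (a) the floor is unchanged between 2v and 2v+1
        have hfloor : (2*p*(2*v+1))/N = (2*p*(2*v))/N := by
          set t : ℤ := (2*p*(2*v))/N with ht
          set r : ℤ := (2*p*(2*v))%N with hr
          have hsd : N * t + r = 2*p*(2*v) := Int.mul_ediv_add_emod _ _
          have hr0 : 0 ≤ r := Int.emod_nonneg _ hNne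
          have hrN : r < N := Int.emod_lt_of_pos _ hN0
          have ht0 : 0 ≤ t := Int.ediv_nonneg (by positivity) hN0.le
          by_cases hcase : r + 2*p < N
          · have he : 2*p*(2*v+1) = (r + 2*p) + N*t := by linear_combination hsd.symm
            rw [he, Int.add_mul_ediv_left _ _ hNne,
              Int.ediv_eq_zero_of_lt (by omega) hcase, zero_add]
          · exfalso
            push_neg at hcase
            have hub : N*(t+1) ≤ 2*p*(2*v) + 2*p := by nlinarith
            have hlb : 2*p*(2*v) < N*(t+1) := by nlinarith
            have htub : t + 1 ≤ 2*p := by nlinarith [hsd, hr0, hvK, hv0]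
            have hw1 : 2*p*(2*p*(t+1) - 2*v) ≤ 2*p + (t+1) := by
              rw [hN] at hub; nlinarith
            have hw2 : 1 ≤ 2*p*(t+1) - 2*v := by
              rw [hN] at hlb; nlinarith
            -- parity: 2p(t+1) - 2v is even and positive, and ≤ small bound
            have hwle : 2*p*(t+1) - 2*v ≤ 2 := by nlinarith
            have hweven : 2*p*(t+1) - 2*v = 2 := by
              obtain ⟨pt, hpt⟩ : ∃ pt : ℤ, pt = p*(t+1) := ⟨_, rfl⟩
              have e1 : 2*pt - 2*v ≤ 2 := by rw [hpt]; linarith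
              have e2 : 1 ≤ 2*pt - 2*v := by rw [hpt]; linarith
              have e3 : 2*pt - 2*v = 2 := by omega
              rw [hpt] at e3; linarith
            have hT : t + 1 = 2*p := by nlinarith
            have hveq : v = 2*p^2 - 1 := by nlinarith
            omega
        -- (b,c) assemble the cancellation
        have hb1 : eps (2*v) = 1 := eps_even ⟨v, by ring⟩
        have hb2 : eps (2*v+1) = -1 := eps_odd ⟨v, by ring⟩
        have hsig : (if m + p*(2*v) < P then (1:ℤ) else -1)
            = (if m + p*(2*v+1) < P then (1:ℤ) else -1) := by
          rcases eq_or_lt_of_le ha0 with haz | hapos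
          · -- a = 0, hence i = 0, m = 0 : both branches true
            have hi : i = 0 := haiff haz.symm
            have hmz : m = 0 := by rw [hm, ← haz, hi]; ring
            have hb : m + p*(2*v+1) < P := by
              rw [hmz, hPN, hN]; nlinarith
            rw [if_pos (by linarith), if_pos hb]
          · -- a ≥ 1 : parity of the cut point
            have hib : i ≠ 0 := by
              intro hi; rw [ha, hi, mul_zero] at hapos
              simp at hapos
            have hi1 : 1 ≤ i := by omega
            have hc : P - m = p*(4*p^2 - 4*p*a - 2*i) - p + a := by
              rw [hm, hPN, hN]; ring
            by_cases h1 : m + p*(2*v) < P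
            · rw [if_pos h1]
              by_cases h2 : m + p*(2*v+1) < P
              · rw [if_pos h2]
              · exfalso
                push_neg at h2
                set c : ℤ := 4*p^2 - 4*p*a - 2*i with hcc
                have hgt : p*(2*v) < p*c := by linarith
                have hlt2 : p*c < p*(2*v+2) := by linarith
                have hcgt : 2*v < c := lt_of_mul_lt_mul_left hgt hp0.le
                have hclt : c < 2*v+2 := lt_of_mul_lt_mul_left hlt2 hp0.le
                obtain ⟨E, hE⟩ : ∃ E : ℤ, E = 2*p^2 - 2*p*a - i := ⟨_, rfl⟩
                have hce : c = 2*E := by rw [hE, hcc]; ring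
                omega
            · rw [if_neg h1, if_neg (by push_neg at h1 ⊢; linarith)]
        calc eps ((2*p*(2*v))/N) * eps (2*v) * (if m + p*(2*v) < P then (1:ℤ) else -1)
              + eps ((2*p*(2*v+1))/N) * eps (2*v+1) * (if m + p*(2*v+1) < P then (1:ℤ) else -1)
            = eps ((2*p*(2*v))/N) * 1 * (if m + p*(2*v) < P then (1:ℤ) else -1)
              + eps ((2*p*(2*v))/N) * (-1) * (if m + p*(2*v) < P then (1:ℤ) else -1) := by
              rw [hb1, hb2, hfloor, hsig]
          _ = 0 := by ring
      rw [hpairs, add_zero]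
      -- the leftover term s = N-1
      have hlast : (2*p*(N-1))/N = 2*p - 1 := by
        have he : 2*p*(N-1) = (N - 2*p) + N*(2*p-1) := by ring
        rw [he, Int.add_mul_ediv_left _ _ hNne,
          Int.ediv_eq_zero_of_lt (by rw [hN]; nlinarith) (by omega), zero_add]
      have heN1 : eps (N-1) = 1 := eps_even ⟨2*p^2 - 1, by rw [hN]; ring⟩
      have he2p : eps (2*p-1) = -1 := eps_odd ⟨p - 1, by ring⟩
      rw [hlast, he2p, heN1]
      rcases eq_or_lt_of_le ha0 with haz | hapos
      · have hi : i = 0 := haiff haz.symm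
        have hmz : m = 0 := by rw [hm, ← haz, hi]; ring
        rw [if_pos (by rw [hmz, hPN]; nlinarith), if_pos hi]
        ring
      · have hib : i ≠ 0 := by
          intro hi; rw [ha, hi, mul_zero] at hapos
          simp at hapos
        have hi1 : 1 ≤ i := by omega
        have hnb : ¬ (m + p*(N-1) < P) := by
          push_neg
          rw [hm, hPN]; nlinarith
        rw [if_neg hnb, if_neg hib]
        ring
    -- reindexing the full sum
    have hreidx : ∀ f : ℤ → ℤ, ∑ k ∈ Ico (0:ℤ) P, f k
        = ∑ i ∈ Ico (0:ℤ) p, ∑ j ∈ Ico (0:ℤ) N, f (i + p*j) := by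
      intro f
      rw [← Finset.sum_product']
      refine (sum_nbij' (fun x : ℤ × ℤ => x.1 + p*x.2) (fun k => (k % p, k / p))
        ?_ ?_ ?_ ?_ ?_).symm
      · intro x hx
        simp only [mem_product, mem_Ico] at hx
        simp only [mem_Ico]
        constructor
        · nlinarith [hx.1.1, hx.2.1]
        · rw [hPN]; nlinarith [hx.1.2, hx.2.2, hx.1.1, hx.2.1]
      · intro k hk
        simp only [mem_Ico] at hk
        simp only [mem_product, mem_Ico]
        refine ⟨⟨Int.emod_nonneg _ hpne, Int.emod_lt_of_pos _ hp0⟩,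
          Int.ediv_nonneg hk.1 hp0.le, ?_⟩
        rw [Int.ediv_lt_iff_lt_mul hp0]
        rw [hPN] at hk; linarith [hk.2]
      · rintro ⟨x1, x2⟩ hx
        simp only [mem_product, mem_Ico] at hx
        have h1 : (x1 + p*x2) % p = x1 := by
          rw [Int.add_mul_emod_self_left, Int.emod_eq_of_lt hx.1.1 hx.1.2]
        have h2 : (x1 + p*x2) / p = x2 := by
          rw [Int.add_mul_ediv_left _ _ hpne, Int.ediv_eq_zero_of_lt hx.1.1 hx.1.2, zero_add]
        show ((x1 + p*x2) % p, (x1 + p*x2) / p) = (x1, x2)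
        rw [h1, h2]
      · intro k hk
        simp only
        exact Int.emod_add_mul_ediv k p
      · intro x hx; rfl
    rw [hreidx (fun k => eps (F k) - eps (G k))]
    -- per-term decomposition
    have hterm : ∀ i ∈ Ico (0:ℤ) p, ∀ j ∈ Ico (0:ℤ) N,
        eps (F (i + p*j)) - eps (G (i + p*j))
          = eps (F i) * eps j
            - eps (F i) * (eps j * eps ((N*((q*i)%p) + 2*p*i + 2*p^2*j)/P)) := by
      intro i hi j hj
      simp only [mem_Ico] at hi hj
      have hFd : F (i + p*j) = F i + q*j := by
        show q*(i + p*j) / p = q*i/p + q*j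
        have he : q*(i + p*j) = q*i + (q*j)*p := by ring
        rw [he, Int.add_mul_ediv_right _ _ hpne]
      have hqi : p*(q*i/p) + (q*i)%p = q*i := Int.mul_ediv_add_emod _ _
      have hGd : G (i + p*j) = (q*j + F i) + (N*((q*i)%p) + 2*p*i + 2*p^2*j)/P := by
        show Q*(i + p*j) / P = (q*j + q*i/p) + (N*((q*i)%p) + 2*p*i + 2*p^2*j)/P
        have he : Q*(i + p*j) = (N*((q*i)%p) + 2*p*i + 2*p^2*j) + P*(q*j + q*i/p) := by
          rw [hQ, hPN, hN]; linear_combination (4*p^2-1)*hqi.symm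
        rw [he, Int.add_mul_ediv_left _ _ hPne]; ring
      rw [hFd, hGd, eps_add, eps_add, eps_add, eps_mul_odd hqodd]
      ring
    rw [Finset.sum_congr rfl (fun i hi => Finset.sum_congr rfl (fun j hj => hterm i hi j hj))]
    -- inner sums
    have hsumj : ∑ j ∈ Ico (0:ℤ) N, eps j = 1 := by
      have hcast : (((N.toNat):ℕ):ℤ) = N := Int.toNat_of_nonneg hN0.le
      rw [← hcast, sum_Ico_int, alt_sum_range, if_neg]
      rw [Nat.not_even_iff_odd]
      have hoddN : Odd N := ⟨2*p^2 - 1, by rw [hN]; ring⟩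
      rwa [← Int.odd_coe_nat, hcast]
    have hinner : ∀ i ∈ Ico (0:ℤ) p,
        (∑ j ∈ Ico (0:ℤ) N, (eps (F i) * eps j
          - eps (F i) * (eps j * eps ((N*((q*i)%p) + 2*p*i + 2*p^2*j)/P))))
        = (if i = 0 then 2 else 0) := by
      intro i hi
      simp only [mem_Ico] at hi
      rw [Finset.sum_sub_distrib, ← Finset.mul_sum, ← Finset.mul_sum, hsumj,
        hSi i hi.1 hi.2]
      by_cases hi0 : i = 0
      · rw [if_pos hi0, if_pos hi0, hi0]
        have hF0 : F 0 = 0 := by show q*0/p = 0; simp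
        rw [hF0, eps_even Even.zero]; ring
      · rw [if_neg hi0, if_neg hi0]; ring
    rw [Finset.sum_congr rfl hinner, Finset.sum_ite_eq' (Ico (0:ℤ) p) 0 (fun _ => 2),
      if_pos (by simp [mem_Ico]; omega)]
  -- from Ico to Ioo
  have main' : ∑ k ∈ Ioo (0:ℤ) P, (eps (F k) - eps (G k)) = 2 := by
    have hins : Ico (0:ℤ) P = insert 0 (Ioo (0:ℤ) P) := by
      ext k; simp only [mem_Ico, mem_insert, mem_Ioo]; omega
    have h0 : eps (F 0) - eps (G 0) = 0 := by
      simp [hF, hG, Int.zero_ediv, mul_zero]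
    rw [hins, Finset.sum_insert (by simp)] at main
    omega
  -- counting
  set A : Finset ℤ := (Ioo (0:ℤ) P).filter (fun k => Even (F k) ∧ Odd (G k)) with hA
  set B : Finset ℤ := (Ioo (0:ℤ) P).filter (fun k => Odd (F k) ∧ Even (G k)) with hB
  have hsetA : {k : ℤ | 0 < k ∧ k < P ∧ Even ⌊(q : ℚ) * (k : ℚ) / (p : ℚ)⌋ ∧
      Odd ⌊(Q : ℚ) * (k : ℚ) / (P : ℚ)⌋} = (A : Set ℤ) := by
    ext k
    simp only [hA, Set.mem_setOf_eq, Finset.coe_filter, mem_Ioo, hfl1, hfl2]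
    tauto
  have hsetB : {k : ℤ | 0 < k ∧ k < P ∧ Odd ⌊(q : ℚ) * (k : ℚ) / (p : ℚ)⌋ ∧
      Even ⌊(Q : ℚ) * (k : ℚ) / (P : ℚ)⌋} = (B : Set ℤ) := by
    ext k
    simp only [hB, Set.mem_setOf_eq, Finset.coe_filter, mem_Ioo, hfl1, hfl2]
    tauto
  rw [hsetA, hsetB, Set.ncard_coe_finset, Set.ncard_coe_finset]
  -- pointwise split
  have hpt : ∀ k : ℤ, eps (F k) - eps (G k) =
      2*(if Even (F k) ∧ Odd (G k) then (1:ℤ) else 0)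
      - 2*(if Odd (F k) ∧ Even (G k) then (1:ℤ) else 0) := by
    intro k
    rcases Int.even_or_odd (F k) with h1 | h1 <;> rcases Int.even_or_odd (G k) with h2 | h2
    · rw [eps_even h1, eps_even h2, if_neg (by simp [Int.not_odd_iff_even.2 h2]),
        if_neg (by simp [Int.not_odd_iff_even.2 h1])]; ring
    · rw [eps_even h1, eps_odd h2, if_pos ⟨h1, h2⟩,
        if_neg (by simp [Int.not_odd_iff_even.2 h1])]; ring
    · rw [eps_odd h1, eps_even h2,
        if_neg (fun h => (Int.not_even_iff_odd.2 h1) h.1), if_pos ⟨h1, h2⟩]; ring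
    · rw [eps_odd h1, eps_odd h2,
        if_neg (fun h => (Int.not_even_iff_odd.2 h1) h.1),
        if_neg (fun h => (Int.not_even_iff_odd.2 h2) h.2)]; ring
  -- sum the pointwise identity
  have hsum2 : (2:ℤ) = 2 * (A.card : ℤ) - 2 * (B.card : ℤ) := by
    calc (2:ℤ) = ∑ k ∈ Ioo (0:ℤ) P, (eps (F k) - eps (G k)) := main'.symm
    _ = ∑ k ∈ Ioo (0:ℤ) P, (2*(if Even (F k) ∧ Odd (G k) then (1:ℤ) else 0)
          - 2*(if Odd (F k) ∧ Even (G k) then (1:ℤ) else 0)) :=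
        Finset.sum_congr rfl (fun k _ => hpt k)
    _ = 2 * (∑ k ∈ Ioo (0:ℤ) P, (if Even (F k) ∧ Odd (G k) then (1:ℤ) else 0))
          - 2 * (∑ k ∈ Ioo (0:ℤ) P, (if Odd (F k) ∧ Even (G k) then (1:ℤ) else 0)) := by
        rw [Finset.sum_sub_distrib, Finset.mul_sum, Finset.mul_sum]
    _ = 2 * (A.card : ℤ) - 2 * (B.card : ℤ) := by
        rw [Finset.sum_boole, Finset.sum_boole]
  omega
end

section
/- Let m ≥ 1 be an odd integer and let A be an m×m symmetric matrix over ℤ such that every off-diagonal entry of A is 1 or −1 and every row of A sums to 0. Then for all indices i, j, the determinant of the (m−1)×(m−1) matrix obtained from A by deleting row i and column j is an odd integer; in particular every cofactor of A is nonzero. (Applied to the linking matrix of a dihedral covering link, this gives the nonvanishing H(1) = 𝓛_{ij} ≠ 0 of the Hosokawa polynomial at 1, via Hoste's formula and Cayley's theorem, since the cofactor equals ± the sum over the m^{m−2} spanning trees of the complete graph of the ±1 products of linking numbers.) -/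
/-- Let `m ≥ 1` be an odd integer (here the matrix size is `m + 1` with `m + 1` odd) and let
`A` be a symmetric integer matrix such that every off-diagonal entry is `1` or `−1` and every
row sums to `0`. Then for all indices `i, j`, the determinant of the matrix obtained from `A`
by deleting row `i` and column `j` is odd; in particular every cofactor of `A` is nonzero. -/
theorem minor_det_odd (m : ℕ) (hm : Odd (m + 1)) (A : Matrix (Fin (m + 1)) (Fin (m + 1)) ℤ)
    (hsymm : A.transpose = A)
    (hoff : ∀ i j, i ≠ j → A i j = 1 ∨ A i j = -1)
    (hrow : ∀ i, ∑ j, A i j = 0) :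
    ∀ i j : Fin (m + 1),
      Odd ((A.submatrix i.succAbove j.succAbove).det) ∧
      (-1 : ℤ) ^ ((i : ℕ) + (j : ℕ)) * (A.submatrix i.succAbove j.succAbove).det ≠ 0 := by
  have hmeven : ((m : ℤ) : ZMod 2) = 0 := by
    rw [ZMod.intCast_zmod_eq_zero_iff_dvd]
    obtain ⟨k, hk⟩ := hm
    exact ⟨(k : ℤ), by push_cast; omega⟩
  have h2 : (2 : ZMod 2) = 0 := by decide
  -- off-diagonal entries map to 1 in ZMod 2
  have hone : ∀ a b : Fin (m + 1), a ≠ b → ((A a b : ℤ) : ZMod 2) = 1 := by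
    intro a b hab
    rcases hoff a b hab with h | h <;> rw [h] <;> simp <;> decide
  -- diagonal entries map to 0 in ZMod 2
  have hdiag : ∀ a : Fin (m + 1), ((A a a : ℤ) : ZMod 2) = 0 := by
    intro a
    have h0 : ((∑ b, A a b : ℤ) : ZMod 2) = 0 := by rw [hrow a]; simp
    rw [Int.cast_sum, Fin.sum_univ_succAbove (fun b => ((A a b : ℤ) : ZMod 2)) a] at h0
    have hterms : ∀ k : Fin m, ((A a (a.succAbove k) : ℤ) : ZMod 2) = 1 := fun k =>
      hone a (a.succAbove k) (Ne.symm (Fin.succAbove_ne a k))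
    rw [Finset.sum_congr rfl (fun k _ => hterms k)] at h0
    simp only [Finset.sum_const, Finset.card_univ, Fintype.card_fin, nsmul_eq_mul, mul_one] at h0
    have : ((m : ℕ) : ZMod 2) = 0 := by exact_mod_cast hmeven
    rw [this, add_zero] at h0
    exact h0
  intro i j
  have key : Odd ((A.submatrix i.succAbove j.succAbove).det) := by
    rw [Int.not_even_iff_odd.symm]
    intro heven
    have hdvd : (2:ℤ) ∣ (A.submatrix i.succAbove j.succAbove).det := heven.two_dvd
    set M := A.submatrix i.succAbove j.succAbove with hM
    set f := Int.castRingHom (ZMod 2) with hf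
    have hcast : ((M.det : ℤ) : ZMod 2) = 0 := by
      rw [ZMod.intCast_zmod_eq_zero_iff_dvd]
      exact_mod_cast hdvd
    have hdetB : (f.mapMatrix M).det = 0 := by
      rw [← RingHom.map_det]
      exact hcast
    obtain ⟨v, hv, hmul⟩ := Matrix.exists_mulVec_eq_zero_iff.mpr hdetB
    set B := f.mapMatrix M with hB
    have hBentry : ∀ k l, B k l =
        if i.succAbove k = j.succAbove l then 0 else 1 := by
      intro k l
      by_cases h : i.succAbove k = j.succAbove l
      · simp only [hB, RingHom.mapMatrix_apply, Matrix.map_apply, hM, Matrix.submatrix_apply,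
          if_pos h, hf, eq_intCast, h]
        exact hdiag _
      · simp only [hB, RingHom.mapMatrix_apply, Matrix.map_apply, hM, Matrix.submatrix_apply,
          if_neg h, hf, eq_intCast]
        exact hone _ _ h
    set s := ∑ l, v l with hs
    have hrowk : ∀ k, s + (∑ l, if i.succAbove k = j.succAbove l then v l else 0) = 0 := by
      intro k
      have hk := congrFun hmul k
      simp only [Matrix.mulVec, dotProduct, Pi.zero_apply] at hk
      have hterm : ∀ l, B k l * v l = v l + (if i.succAbove k = j.succAbove l then v l else 0) := by
        intro l
        rw [hBentry k l]
        by_cases h : i.succAbove k = j.succAbove l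
        · simp [h, CharTwo.add_self_eq_zero]
        · simp [h]
      rw [Finset.sum_congr rfl (fun l _ => hterm l), Finset.sum_add_distrib] at hk
      exact hk
    by_cases hij : i = j
    · -- principal minor case: each row equation gives v k = s
      subst hij
      have hvk : ∀ k, v k = s := by
        intro k
        have h := hrowk k
        have hsum : (∑ l, if i.succAbove k = i.succAbove l then v l else 0) = v k := by
          have : ∀ l : Fin m, (if i.succAbove k = i.succAbove l then v l else 0) =
              (if k = l then v l else 0) := by
            intro l
            simp [Fin.succAbove_right_inj]
          rw [Finset.sum_congr rfl (fun l _ => this l)]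
          simp
        rw [hsum] at h
        linear_combination h - s * h2
      have hs0 : s = 0 := by
        have : s = ∑ l : Fin m, s := by
          rw [hs]
          exact Finset.sum_congr rfl (fun l _ => hvk l)
        rw [Finset.sum_const, Finset.card_univ, Fintype.card_fin, nsmul_eq_mul] at this
        have hm0 : ((m : ℕ) : ZMod 2) = 0 := by exact_mod_cast hmeven
        rw [hm0, zero_mul] at this
        exact this
      apply hv
      funext k
      rw [hvk k, hs0]
      rfl
    · -- off-diagonal case
      obtain ⟨k₀, hk₀⟩ := Fin.exists_succAbove_eq (Ne.symm hij)
      obtain ⟨l₀, hl₀⟩ := Fin.exists_succAbove_eq hij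
      have hs0 : s = 0 := by
        have h := hrowk k₀
        have hz : (∑ l, if i.succAbove k₀ = j.succAbove l then v l else 0) = 0 := by
          apply Finset.sum_eq_zero
          intro l _
          rw [if_neg]
          rw [hk₀]
          exact (Fin.succAbove_ne j l).symm
        rwa [hz, add_zero] at h
      have hvl : ∀ l, l ≠ l₀ → v l = 0 := by
        intro l hl
        have hne : j.succAbove l ≠ i := by
          intro h
          exact hl (Fin.succAbove_right_injective (h.trans hl₀.symm))
        obtain ⟨k, hk⟩ := Fin.exists_succAbove_eq hne
        have h := hrowk k
        have hsum : (∑ l', if i.succAbove k = j.succAbove l' then v l' else 0) = v l := by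
          rw [Finset.sum_eq_single l]
          · rw [if_pos hk]
          · intro b _ hb
            rw [if_neg]
            rw [hk]
            intro hcontra
            exact hb (Fin.succAbove_right_injective hcontra.symm)
          · intro h'
            exact absurd (Finset.mem_univ l) h'
        rw [hs0, hsum, zero_add] at h
        exact h
      have hsl₀ : s = v l₀ := by
        rw [hs, Finset.sum_eq_single l₀]
        · intro b _ hb
          exact hvl b hb
        · intro h'
          exact absurd (Finset.mem_univ l₀) h'
      apply hv
      funext l
      by_cases h : l = l₀
      · rw [h]
        show v l₀ = 0
        rw [← hsl₀, hs0]
      · exact hvl l h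
  refine ⟨key, ?_⟩
  apply mul_ne_zero
  · exact pow_ne_zero _ (by norm_num)
  · intro h0
    rw [h0] at key
    exact (Int.not_odd_iff_even.mpr Even.zero) key
end
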